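/- For every finite rooted tree T with t leaves in which no vertex has exactly one child, there exists a finite rooted binary tree T' (every vertex has exactly two children or none) with t leaves, in which the depths of any two leaves differ by at most 1, such that g(T') ≥ g(T). -/

import Mathlib

attribute [local instance] Classical.propDecidable

/-- A finite rooted tree, encoded by a parent function together with a depth
function recording the graph distance to the root. -/
structure FiniteRootedTree where
  V : Type
  fintypeV : Fintype V
  root : V
  parent : V → V
  depth : V → ℕ
  depth_root : depth root = 0
  depth_parent : ∀ v, v ≠ root → depth v = depth (parent v) + 1
  root_of_depth_zero : ∀ v, depth v = 0 → v = root

attribute [instance] FiniteRootedTree.fintypeV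

namespace FiniteRootedTree

/-- `u` is a child of `v`. -/
def IsChild (T : FiniteRootedTree) (u v : T.V) : Prop :=
  u ≠ T.root ∧ T.parent u = v

/-- The number of children of `v`. -/
noncomputable def numChildren (T : FiniteRootedTree) (v : T.V) : ℕ :=
  Set.ncard {u : T.V | T.IsChild u v}

/-- A leaf is a vertex with no children. -/
def IsLeaf (T : FiniteRootedTree) (v : T.V) : Prop :=
  ∀ u, ¬ T.IsChild u v

/-- The finset of leaves of `T`. -/
noncomputable def leaves (T : FiniteRootedTree) : Finset T.V :=
  Finset.univ.filter fun v => T.IsLeaf v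

/-- Probability that the random root-to-leaf walk ends at the leaf `l`:
the product of `1 / c(v)` over the vertices `v ≠ l` on the root-to-`l` path
(equivalently, over the strict ancestors `parent^[k+1] l` of `l`). -/
noncomputable def leafProb (T : FiniteRootedTree) (l : T.V) : ℝ :=
  ∏ k ∈ Finset.range (T.depth l), (1 : ℝ) / (T.numChildren (T.parent^[k + 1] l))

/-- The expected length of the random root-to-leaf walk in `T`. -/
noncomputable def g (T : FiniteRootedTree) : ℝ :=
  ∑ l ∈ T.leaves, (T.depth l : ℝ) * T.leafProb l

/-- The number of vertices of the subtree of `T` rooted at `v`, i.e. the number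
of vertices `u` having `v` as an ancestor (including `v` itself). -/
noncomputable def subtreeSize (T : FiniteRootedTree) (v : T.V) : ℕ :=
  Set.ncard {u : T.V | ∃ k : ℕ, T.parent^[k] u = v}

end FiniteRootedTree

/-- The truncations of `T₁` and `T₂` at level `h` (the rooted trees induced on
the vertices of depth at most `h`) are isomorphic as rooted trees. -/
def TruncIso (T₁ T₂ : FiniteRootedTree) (h : ℕ) : Prop :=
  ∃ φ : {v : T₁.V // T₁.depth v ≤ h} ≃ {v : T₂.V // T₂.depth v ≤ h},
    (φ ⟨T₁.root, by simp [T₁.depth_root]⟩).val = T₂.root ∧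
    ∀ u u' : {v : T₁.V // T₁.depth v ≤ h},
      T₁.IsChild u'.val u.val ↔ T₂.IsChild (φ u').val (φ u).val

/-- `InjM h U` is the set of root-respecting injective homomorphisms from the
rooted tree `U` into the complete binary tree `M_h`, whose vertices are the
boolean lists of length at most `h`, rooted at the empty list, with the
children of a list being its two one-element extensions. -/
def InjM (h : ℕ) (U : FiniteRootedTree) : Set (U.V → List Bool) :=
  {α | Function.Injective α ∧ (∀ u, (α u).length ≤ h) ∧ α U.root = [] ∧
    ∀ u u' : U.V, U.IsChild u' u → ∃ b : Bool, α u' = α u ++ [b]}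

lemma key_ineq (d k : ℕ) (p : ℝ) (hp : 0 < p) (hpd : p ≤ (1/2:ℝ)^d) :
    (d:ℝ) * p ≤ ((k:ℝ) - 1) * p + (1/2:ℝ)^k := by
  rcases lt_or_ge d k with h | h
  · have hd : (d:ℝ) + 1 ≤ k := by exact_mod_cast h
    have hk : (0:ℝ) < (1/2:ℝ)^k := by positivity
    nlinarith
  · have hm : (d - k : ℕ) + 1 ≤ 2 ^ (d - k) := Nat.lt_two_pow_self
    have hcast : (((d - k : ℕ)) : ℝ) = (d:ℝ) - k := by
      push_cast [Nat.cast_sub h]; ring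
    have hmr : ((d:ℝ) - k) + 1 ≤ 2 ^ (d - k : ℕ) := by
      rw [← hcast]; exact_mod_cast hm
    have hsplit : ((1:ℝ)/2)^d = (1/2:ℝ)^(d - k : ℕ) * (1/2:ℝ)^k := by
      rw [← pow_add]; congr 1; omega
    have h2 : ((2:ℝ))^(d - k:ℕ) * ((1/2:ℝ))^(d - k:ℕ) = 1 := by
      rw [← mul_pow]; norm_num
    have hq : (0:ℝ) < (1/2:ℝ)^(d-k:ℕ) := by positivity
    have hk0 : (0:ℝ) < (1/2:ℝ)^k := by positivity
    have hpos : (0:ℝ) ≤ (d:ℝ) - k + 1 := by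
      have : (k:ℝ) ≤ d := by exact_mod_cast h
      linarith
    have step1 : ((d:ℝ) - k + 1) * p ≤ ((d:ℝ) - k + 1) * ((1/2:ℝ)^(d-k:ℕ) * (1/2:ℝ)^k) := by
      apply mul_le_mul_of_nonneg_left _ hpos
      rw [← hsplit]; exact hpd
    have step2 : ((d:ℝ) - k + 1) * ((1/2:ℝ)^(d-k:ℕ) * (1/2:ℝ)^k)
        ≤ (2:ℝ)^(d-k:ℕ) * ((1/2:ℝ)^(d-k:ℕ) * (1/2:ℝ)^k) :=
      mul_le_mul_of_nonneg_right hmr (by positivity)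
    have step3 : (2:ℝ)^(d-k:ℕ) * ((1/2:ℝ)^(d-k:ℕ) * (1/2:ℝ)^k) = (1/2:ℝ)^k := by
      rw [← mul_assoc, h2, one_mul]
    have : (d:ℝ) * p = ((k:ℝ) - 1) * p + ((d:ℝ) - k + 1) * p := by ring
    linarith

namespace FiniteRootedTree

variable (T : FiniteRootedTree)

/-- children as a finset -/
noncomputable def childrenF (v : T.V) : Finset T.V :=
  Finset.univ.filter fun u => T.IsChild u v

lemma numChildren_eq_card (v : T.V) : T.numChildren v = (T.childrenF v).card := by
  rw [numChildren, childrenF, Set.ncard_eq_toFinset_card']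
  congr 1
  ext u
  simp

lemma depth_iterate {v : T.V} {j : ℕ} (h : j ≤ T.depth v) :
    T.depth (T.parent^[j] v) = T.depth v - j := by
  induction j with
  | zero => simp
  | succ n ih =>
    have hn : n ≤ T.depth v := Nat.le_of_succ_le h
    have hd := ih hn
    have hne : T.parent^[n] v ≠ T.root := by
      intro he
      rw [he, T.depth_root] at hd
      omega
    rw [Function.iterate_succ_apply']
    have := T.depth_parent _ hne
    omega

lemma isChild_iterate {v : T.V} {j : ℕ} (h : j < T.depth v) :
    T.IsChild (T.parent^[j] v) (T.parent^[j+1] v) := by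
  have hd := T.depth_iterate (le_of_lt h)
  constructor
  · intro he
    rw [he, T.depth_root] at hd
    omega
  · rw [Function.iterate_succ_apply']

lemma depth_of_isChild {u v : T.V} (h : T.IsChild u v) : T.depth u = T.depth v + 1 := by
  rw [T.depth_parent u h.1, h.2]

/-- leafProb of a child -/
lemma leafProb_child {u v : T.V} (h : T.IsChild u v) :
    T.leafProb u = T.leafProb v * (1 / (T.numChildren v : ℝ)) := by
  have hit : ∀ k : ℕ, T.parent^[k+1] u = T.parent^[k] v := fun k => by
    rw [Function.iterate_succ_apply, h.2]
  rw [leafProb, leafProb, T.depth_of_isChild h, Finset.prod_range_succ']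
  congr 1
  · apply Finset.prod_congr rfl
    intro k _
    rw [hit (k+1)]
  · rw [hit 0, Function.iterate_zero_apply]

lemma sum_children_leafProb {v : T.V} (hv : ¬ T.IsLeaf v) :
    ∑ u ∈ T.childrenF v, T.leafProb u = T.leafProb v := by
  have hc : T.numChildren v ≠ 0 := by
    rw [numChildren_eq_card]
    intro h
    apply hv
    intro u hu
    have : u ∈ T.childrenF v := by simp [childrenF, hu]
    simp [Finset.card_eq_zero.mp h] at this
  have : ∑ u ∈ T.childrenF v, T.leafProb u
      = ∑ u ∈ T.childrenF v, T.leafProb v * (1 / (T.numChildren v : ℝ)) := by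
    apply Finset.sum_congr rfl
    intro u hu
    exact T.leafProb_child (by simpa [childrenF] using hu)
  rw [this, Finset.sum_const, ← numChildren_eq_card, nsmul_eq_mul]
  have hcr : (T.numChildren v : ℝ) ≠ 0 := Nat.cast_ne_zero.mpr hc
  field_simp

/-- Kraft equality -/
lemma sum_leafProb : ∑ l ∈ T.leaves, T.leafProb l = 1 := by
  have key : ∀ d : ℕ,
      ∑ v ∈ Finset.univ.filter (fun v => T.depth v = d ∨ (T.IsLeaf v ∧ T.depth v < d)),
        T.leafProb v = 1 := by
    intro d
    induction d with
    | zero =>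
      have : Finset.univ.filter (fun v => T.depth v = 0 ∨ (T.IsLeaf v ∧ T.depth v < 0))
          = {T.root} := by
        ext v
        simp only [Finset.mem_filter, Finset.mem_univ, true_and, Finset.mem_singleton]
        constructor
        · rintro (h | ⟨_, h⟩)
          · exact T.root_of_depth_zero v h
          · omega
        · rintro rfl; exact Or.inl T.depth_root
      rw [this, Finset.sum_singleton, leafProb, T.depth_root]
      simp
    | succ d ih =>
      classical
      set Lf : Finset T.V := Finset.univ.filter
        (fun v => T.IsLeaf v ∧ (T.depth v = d ∨ T.depth v < d)) with hLf
      set Nd : Finset T.V := Finset.univ.filter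
        (fun v => ¬ T.IsLeaf v ∧ T.depth v = d) with hNd
      set Cd : Finset T.V := Finset.univ.filter (fun v => T.depth v = d + 1) with hCd
      have hsplit1 : Finset.univ.filter
          (fun v => T.depth v = d ∨ (T.IsLeaf v ∧ T.depth v < d)) = Lf ∪ Nd := by
        ext v
        simp only [hLf, hNd, Finset.mem_filter, Finset.mem_union, Finset.mem_univ, true_and]
        by_cases h : T.IsLeaf v <;> [tauto; tauto]
      have hsplit2 : Finset.univ.filter
          (fun v => T.depth v = d + 1 ∨ (T.IsLeaf v ∧ T.depth v < d + 1)) = Lf ∪ Cd := by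
        ext v
        simp only [hLf, hCd, Finset.mem_filter, Finset.mem_union, Finset.mem_univ, true_and]
        constructor
        · rintro (h | ⟨h1, h2⟩)
          · exact Or.inr h
          · exact Or.inl ⟨h1, by omega⟩
        · rintro (⟨h1, h2⟩ | h)
          · exact Or.inr ⟨h1, by omega⟩
          · exact Or.inl h
      have hdisj1 : Disjoint Lf Nd := by
        rw [Finset.disjoint_left]
        intro v hv hv'
        simp only [hLf, hNd, Finset.mem_filter] at hv hv'
        tauto
      have hdisj2 : Disjoint Lf Cd := by
        rw [Finset.disjoint_left]
        intro v hv hv'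
        simp only [hLf, hCd, Finset.mem_filter] at hv hv'
        omega
      -- sum over Cd equals sum over Nd
      have hfib : ∑ u ∈ Cd, T.leafProb u = ∑ v ∈ Nd, ∑ u ∈ Cd.filter (fun u => T.parent u = v), T.leafProb u := by
        refine (Finset.sum_fiberwise_of_maps_to ?_ _).symm
        intro u hu
        simp only [hCd, Finset.mem_filter, Finset.mem_univ, true_and] at hu
        have hune : u ≠ T.root := by
          intro he; rw [he, T.depth_root] at hu; omega
        have hchild : T.IsChild u (T.parent u) := ⟨hune, rfl⟩
        simp only [hNd, Finset.mem_filter, Finset.mem_univ, true_and]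
        constructor
        · intro hl; exact hl u hchild
        · have := T.depth_of_isChild hchild; omega
      have hfibeq : ∀ v ∈ Nd, Cd.filter (fun u => T.parent u = v) = T.childrenF v := by
        intro v hv
        simp only [hNd, Finset.mem_filter, Finset.mem_univ, true_and] at hv
        ext u
        simp only [hCd, childrenF, Finset.mem_filter, Finset.mem_univ, true_and]
        constructor
        · rintro ⟨h1, h2⟩
          refine ⟨?_, h2⟩
          intro he; rw [he, T.depth_root] at h1; omega
        · intro hc
          refine ⟨?_, hc.2⟩
          have := T.depth_of_isChild hc
          omega
      have hCN : ∑ u ∈ Cd, T.leafProb u = ∑ v ∈ Nd, T.leafProb v := by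
        rw [hfib]
        apply Finset.sum_congr rfl
        intro v hv
        rw [hfibeq v hv]
        apply T.sum_children_leafProb
        simp only [hNd, Finset.mem_filter] at hv
        exact hv.2.1
      rw [hsplit2, Finset.sum_union hdisj2, hCN, ← Finset.sum_union hdisj1, ← hsplit1, ih]
  have hfin : T.leaves = Finset.univ.filter
      (fun v => T.depth v = (Finset.univ.sup T.depth + 1) ∨
        (T.IsLeaf v ∧ T.depth v < Finset.univ.sup T.depth + 1)) := by
    ext v
    simp only [leaves, Finset.mem_filter, Finset.mem_univ, true_and]
    have hle : T.depth v ≤ Finset.univ.sup T.depth := Finset.le_sup (Finset.mem_univ v)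
    constructor
    · intro h; exact Or.inr ⟨h, by omega⟩
    · rintro (h | ⟨h, _⟩)
      · omega
      · exact h
  rw [hfin, key]

lemma leaves_nonempty : T.leaves.Nonempty := by
  by_contra h
  rw [Finset.not_nonempty_iff_eq_empty] at h
  have := T.sum_leafProb
  rw [h, Finset.sum_empty] at this
  norm_num at this

lemma numChildren_iterate_ge_two (hone : ∀ v : T.V, T.numChildren v ≠ 1)
    {l : T.V} {j : ℕ} (hj : j < T.depth l) :
    2 ≤ T.numChildren (T.parent^[j+1] l) := by
  have hc := T.isChild_iterate hj
  have hmem : T.parent^[j] l ∈ T.childrenF (T.parent^[j+1] l) := by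
    simp only [childrenF, Finset.mem_filter, Finset.mem_univ, true_and]
    exact hc
  have hpos : 0 < (T.childrenF (T.parent^[j+1] l)).card := Finset.card_pos.mpr ⟨_, hmem⟩
  have hnum := T.numChildren_eq_card (T.parent^[j+1] l)
  have := hone (T.parent^[j+1] l)
  omega

lemma leafProb_pos (hone : ∀ v : T.V, T.numChildren v ≠ 1) (l : T.V) :
    0 < T.leafProb l := by
  apply Finset.prod_pos
  intro k hk
  rw [Finset.mem_range] at hk
  have := T.numChildren_iterate_ge_two hone hk
  positivity

lemma leafProb_le (hone : ∀ v : T.V, T.numChildren v ≠ 1) (l : T.V) :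
    T.leafProb l ≤ (1/2 : ℝ) ^ (T.depth l) := by
  rw [leafProb, ← Finset.card_range (T.depth l), ← Finset.prod_const,
    Finset.card_range]
  apply Finset.prod_le_prod
  · intro k hk
    positivity
  · intro k hk
    rw [Finset.mem_range] at hk
    have h2 := T.numChildren_iterate_ge_two hone hk
    rw [div_le_div_iff₀ (by positivity) (by norm_num)]
    have : (2:ℝ) ≤ (T.numChildren (T.parent^[k+1] l) : ℝ) := by exact_mod_cast h2
    linarith


lemma g_le (hone : ∀ v : T.V, T.numChildren v ≠ 1) :
    T.g ≤ (Nat.log 2 T.leaves.card : ℝ) - 1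
      + T.leaves.card * (1/2:ℝ)^(Nat.log 2 T.leaves.card) := by
  set k := Nat.log 2 T.leaves.card with hk
  have hle : T.g ≤ ∑ l ∈ T.leaves, (((k:ℝ) - 1) * T.leafProb l + (1/2:ℝ)^k) :=
    Finset.sum_le_sum fun l _ =>
      key_ineq (T.depth l) k _ (T.leafProb_pos hone l) (T.leafProb_le hone l)
  rw [Finset.sum_add_distrib, ← Finset.mul_sum, T.sum_leafProb, Finset.sum_const,
    nsmul_eq_mul] at hle
  linarith

end FiniteRootedTree

namespace BalAux
open FiniteRootedTree

noncomputable def balTree (t : ℕ) (ht : 1 ≤ t) : FiniteRootedTree where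
  V := ↥(Finset.Ico 1 (2*t))
  fintypeV := FinsetCoe.fintype _
  root := ⟨1, by rw [Finset.mem_Ico]; omega⟩
  parent := fun v => if h : 2 ≤ v.val then
      ⟨v.val / 2, by
        have hv := Finset.mem_Ico.mp v.2
        rw [Finset.mem_Ico]
        omega⟩
    else v
  depth := fun v => Nat.log 2 v.val
  depth_root := Nat.log_one_right 2
  depth_parent := by
    intro v hv
    have hv2 : 2 ≤ v.val := by
      have hm := Finset.mem_Ico.mp v.2
      rcases Nat.lt_or_ge v.val 2 with h | h
      · exfalso; apply hv; apply Subtype.ext; simp; omega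
      · exact h
    simp only [dif_pos hv2]
    have h1 : Nat.log 2 (v.val/2) = Nat.log 2 v.val - 1 := Nat.log_div_base 2 v.val
    have h2 : 0 < Nat.log 2 v.val := Nat.log_pos one_lt_two hv2
    omega
  root_of_depth_zero := by
    intro v hv
    have hm := Finset.mem_Ico.mp v.2
    apply Subtype.ext
    simp only
    by_contra h
    have hv' : Nat.log 2 v.val = 0 := hv
    have hv2 : 2 ≤ v.val := by omega
    have := Nat.log_pos one_lt_two hv2
    omega

variable {t : ℕ} (ht : 1 ≤ t)

lemma bal_mem (v : (balTree t ht).V) : 1 ≤ v.val ∧ v.val < 2*t :=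
  Finset.mem_Ico.mp v.2

lemma bal_root_val : ((balTree t ht).root).val = 1 := rfl

lemma bal_depth (v : (balTree t ht).V) : (balTree t ht).depth v = Nat.log 2 v.val := rfl

lemma bal_parent_val (v : (balTree t ht).V) (h : 2 ≤ v.val) :
    ((balTree t ht).parent v).val = v.val / 2 := by
  show (if h : 2 ≤ v.val then _ else v).val = v.val / 2
  exact congrArg Subtype.val (dif_pos h)

lemma bal_ne_root_iff (v : (balTree t ht).V) : v ≠ (balTree t ht).root ↔ 2 ≤ v.val := by
  have hm := bal_mem ht v
  constructor
  · intro h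
    by_contra h2
    exact h (Subtype.ext (show v.val = 1 by omega))
  · intro h2 he
    rw [he] at h2
    exact absurd h2 (by norm_num [bal_root_val])

lemma bal_isChild_iff (u v : (balTree t ht).V) :
    (balTree t ht).IsChild u v ↔ 2 ≤ u.val ∧ u.val / 2 = v.val := by
  rw [IsChild, bal_ne_root_iff]
  constructor
  · rintro ⟨h1, h2⟩
    refine ⟨h1, ?_⟩
    rw [← bal_parent_val ht u h1, h2]
  · rintro ⟨h1, h2⟩
    refine ⟨h1, Subtype.ext ?_⟩
    rw [bal_parent_val ht u h1, h2]

lemma bal_numChildren (v : (balTree t ht).V) :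
    (balTree t ht).numChildren v = if v.val < t then 2 else 0 := by
  have hm := bal_mem ht v
  rw [numChildren]
  split_ifs with h
  · have h0 : (2*v.val : ℕ) ∈ Finset.Ico 1 (2*t) := by rw [Finset.mem_Ico]; omega
    have h1 : (2*v.val+1 : ℕ) ∈ Finset.Ico 1 (2*t) := by rw [Finset.mem_Ico]; omega
    have hset : {u : (balTree t ht).V | (balTree t ht).IsChild u v}
        = {⟨2*v.val, h0⟩, ⟨2*v.val+1, h1⟩} := by
      ext u
      have hmu := bal_mem ht u
      simp only [Set.mem_setOf_eq, Set.mem_insert_iff, Set.mem_singleton_iff,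
        bal_isChild_iff ht]
      constructor
      · rintro ⟨h2, h3⟩
        rcases Nat.lt_or_ge u.val (2*v.val+1) with h4 | h4
        · exact Or.inl (Subtype.ext ((by omega : u.val = 2*v.val)))
        · exact Or.inr (Subtype.ext ((by omega : u.val = 2*v.val+1)))
      · rintro (rfl | rfl)
        · exact ⟨(by omega : 2 ≤ 2*v.val), (by omega : 2*v.val/2 = v.val)⟩
        · exact ⟨(by omega : 2 ≤ 2*v.val+1), (by omega : (2*v.val+1)/2 = v.val)⟩
    rw [hset]
    apply Set.ncard_pair
    intro he
    have : (2*v.val : ℕ) = 2*v.val+1 := Subtype.ext_iff.mp he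
    omega
  · have hset : {u : (balTree t ht).V | (balTree t ht).IsChild u v} = ∅ := by
      ext u
      have hmu := bal_mem ht u
      simp only [Set.mem_setOf_eq, Set.mem_empty_iff_false, iff_false, bal_isChild_iff ht]
      omega
    rw [hset, Set.ncard_empty]

lemma bal_isLeaf_iff (v : (balTree t ht).V) :
    (balTree t ht).IsLeaf v ↔ t ≤ v.val := by
  have hm := bal_mem ht v
  constructor
  · intro h
    by_contra h2
    have h0 : (2*v.val : ℕ) ∈ Finset.Ico 1 (2*t) := by rw [Finset.mem_Ico]; omega
    exact h ⟨2*v.val, h0⟩ ((bal_isChild_iff ht _ _).mpr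
      ⟨(by omega : 2 ≤ 2*v.val), (by omega : 2*v.val/2 = v.val)⟩)
  · intro h2 u hu
    have hmu := bal_mem ht u
    rw [bal_isChild_iff ht] at hu
    omega

lemma bal_leaves : (balTree t ht).leaves
    = Finset.univ.filter (fun v => t ≤ v.val) := by
  ext v
  simp only [leaves, Finset.mem_filter, Finset.mem_univ, true_and, bal_isLeaf_iff ht]

lemma bal_leaves_card : (balTree t ht).leaves.card = t := by
  rw [bal_leaves ht]
  have hb : (Finset.univ.filter (fun v : (balTree t ht).V => t ≤ v.val)).card
      = (Finset.Ico t (2*t)).card := by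
    apply Finset.card_bij (fun v _ => v.val)
    · intro a ha
      have hm := bal_mem ht a
      rw [Finset.mem_Ico]
      simp only [Finset.mem_filter, Finset.mem_univ, true_and] at ha
      omega
    · intro a ha b hb h
      exact Subtype.ext h
    · intro b hb
      rw [Finset.mem_Ico] at hb
      have hmb : b ∈ Finset.Ico 1 (2*t) := by rw [Finset.mem_Ico]; omega
      exact ⟨⟨b, hmb⟩, Finset.mem_filter.mpr ⟨Finset.mem_univ _, hb.1⟩, rfl⟩
  rw [hb, Nat.card_Ico]
  omega

lemma bal_iterate (v : (balTree t ht).V) (j : ℕ) (hj : j ≤ Nat.log 2 v.val) :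
    ((balTree t ht).parent^[j] v).val = v.val / 2^j := by
  induction j with
  | zero => simp
  | succ n ih =>
    have hn : n ≤ Nat.log 2 v.val := Nat.le_of_succ_le hj
    have hval := ih hn
    have hge : 2 ≤ v.val / 2^n := by
      rw [Nat.le_div_iff_mul_le (Nat.pow_pos (n := n) (by norm_num : 0 < 2))]
      calc 2 * 2^n = 2^(n+1) := by ring
        _ ≤ 2^(Nat.log 2 v.val) := Nat.pow_le_pow_right (by norm_num) hj
        _ ≤ v.val := Nat.pow_log_le_self 2 (by have := bal_mem ht v; omega)
    rw [Function.iterate_succ_apply', bal_parent_val ht _ (by rw [hval]; exact hge), hval,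
      Nat.div_div_eq_div_mul, pow_succ]

lemma bal_leafProb (l : (balTree t ht).V) (hl : (balTree t ht).IsLeaf l) :
    (balTree t ht).leafProb l = (1/2:ℝ) ^ ((balTree t ht).depth l) := by
  have hm := bal_mem ht l
  have hlv := (bal_isLeaf_iff ht l).mp hl
  rw [leafProb, bal_depth]
  have hcongr : ∀ j ∈ Finset.range (Nat.log 2 l.val),
      (1:ℝ) / ((balTree t ht).numChildren ((balTree t ht).parent^[j+1] l)) = (1/2:ℝ) := by
    intro j hj
    rw [Finset.mem_range] at hj
    have hval := bal_iterate ht l (j+1) hj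
    have hlt : l.val / 2^(j+1) < t := by
      have h1 : l.val / 2^(j+1) ≤ l.val / 2 :=
        Nat.div_le_div_left (by
          calc (2:ℕ) = 2^1 := (pow_one 2).symm
            _ ≤ 2^(j+1) := Nat.pow_le_pow_right (by norm_num) (by omega)) (by norm_num)
      omega
    have hnc : (balTree t ht).numChildren ((balTree t ht).parent^[j+1] l) = 2 := by
      rw [bal_numChildren ht, if_pos (by rw [hval]; exact hlt)]
    rw [hnc]
    norm_num
  rw [Finset.prod_congr rfl hcongr, Finset.prod_const, Finset.card_range]
lemma bal_g : (balTree t ht).g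
    = (Nat.log 2 t : ℝ) - 1 + t * (1/2:ℝ)^(Nat.log 2 t) := by
  set k := Nat.log 2 t with hk
  have h2k : 2^k ≤ t := Nat.pow_log_le_self 2 (by omega)
  have hlt : t < 2^(k+1) := Nat.lt_pow_succ_log_self one_lt_two t
  have h1 : t ≤ 2^(k+1) := le_of_lt hlt
  have h2 : 2^(k+1) ≤ 2*t := by
    have : (2:ℕ)^(k+1) = 2*2^k := by ring
    omega
  have hstep : (balTree t ht).g = ∑ l ∈ (balTree t ht).leaves,
      ((balTree t ht).depth l : ℝ) * (1/2:ℝ)^((balTree t ht).depth l) := by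
    rw [FiniteRootedTree.g]
    apply Finset.sum_congr rfl
    intro l hl
    rw [bal_leafProb ht l (Finset.mem_filter.mp hl).2]
  have hbij : ∑ l ∈ (balTree t ht).leaves,
      ((balTree t ht).depth l : ℝ) * (1/2:ℝ)^((balTree t ht).depth l)
      = ∑ i ∈ Finset.Ico t (2*t), (Nat.log 2 i : ℝ) * (1/2:ℝ)^(Nat.log 2 i) := by
    apply Finset.sum_bij (fun l _ => l.val)
    · intro a ha
      have hm := bal_mem ht a
      rw [bal_leaves ht] at ha
      simp only [Finset.mem_filter, Finset.mem_univ, true_and] at ha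
      rw [Finset.mem_Ico]
      omega
    · intro a _ b _ h
      exact Subtype.ext h
    · intro b hb
      rw [Finset.mem_Ico] at hb
      have hmb : b ∈ Finset.Ico 1 (2*t) := by rw [Finset.mem_Ico]; omega
      refine ⟨⟨b, hmb⟩, ?_, rfl⟩
      rw [bal_leaves ht]
      exact Finset.mem_filter.mpr ⟨Finset.mem_univ _, hb.1⟩
    · intro a _
      rfl
  have e1 : ∑ i ∈ Finset.Ico t (2^(k+1)), (Nat.log 2 i : ℝ) * (1/2:ℝ)^(Nat.log 2 i)
      = ((2^(k+1) - t : ℕ) : ℝ) * ((k:ℝ) * (1/2:ℝ)^k) := by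
    have hcg : ∀ i ∈ Finset.Ico t (2^(k+1)),
        (Nat.log 2 i : ℝ) * (1/2:ℝ)^(Nat.log 2 i) = (k:ℝ) * (1/2:ℝ)^k := by
      intro i hi
      rw [Finset.mem_Ico] at hi
      have : Nat.log 2 i = k := Nat.log_eq_of_pow_le_of_lt_pow (le_trans h2k hi.1) hi.2
      rw [this]
    rw [Finset.sum_congr rfl hcg, Finset.sum_const, Nat.card_Ico, nsmul_eq_mul]
  have e2 : ∑ i ∈ Finset.Ico (2^(k+1)) (2*t), (Nat.log 2 i : ℝ) * (1/2:ℝ)^(Nat.log 2 i)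
      = ((2*t - 2^(k+1) : ℕ) : ℝ) * (((k:ℝ)+1) * (1/2:ℝ)^(k+1)) := by
    have hcg : ∀ i ∈ Finset.Ico (2^(k+1)) (2*t),
        (Nat.log 2 i : ℝ) * (1/2:ℝ)^(Nat.log 2 i) = ((k:ℝ)+1) * (1/2:ℝ)^(k+1) := by
      intro i hi
      rw [Finset.mem_Ico] at hi
      have hup : i < 2^(k+1+1) := by
        have : (2:ℕ)^(k+2) = 2*2^(k+1) := by ring
        omega
      have : Nat.log 2 i = k+1 := Nat.log_eq_of_pow_le_of_lt_pow hi.1 hup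
      rw [this]
      push_cast
      ring
    rw [Finset.sum_congr rfl hcg, Finset.sum_const, Nat.card_Ico, nsmul_eq_mul]
  rw [hstep, hbij, ← Finset.sum_Ico_consecutive _ h1 h2, e1, e2,
    Nat.cast_sub h1, Nat.cast_sub h2]
  push_cast
  have hp : ((2:ℝ))^k ≠ 0 := by positivity
  have hq : ((1:ℝ)/2)^k = ((2:ℝ)^k)⁻¹ := by
    rw [one_div, inv_pow]
  have hq1 : ((1:ℝ)/2)^(k+1) = ((2:ℝ)^(k+1))⁻¹ := by
    rw [one_div, inv_pow]
  rw [hq, hq1]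
  have hp1 : ((2:ℝ))^(k+1) ≠ 0 := by positivity
  field_simp
  ring

end BalAux

/-- every tree without unary vertices is dominated (in expected walk
length) by a binary tree with the same number of leaves in which all leaf depths
differ by at most 1. -/
theorem stmt_12 (T : FiniteRootedTree) (hone : ∀ v : T.V, T.numChildren v ≠ 1) :
    ∃ T' : FiniteRootedTree, (∀ v : T'.V, T'.numChildren v = 2 ∨ T'.numChildren v = 0) ∧
      T'.leaves.card = T.leaves.card ∧
      (∀ l₁ l₂ : T'.V, T'.IsLeaf l₁ → T'.IsLeaf l₂ → T'.depth l₁ ≤ T'.depth l₂ + 1) ∧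
      T.g ≤ T'.g := by
  have ht : 1 ≤ T.leaves.card := Finset.card_pos.mpr T.leaves_nonempty
  refine ⟨BalAux.balTree T.leaves.card ht, ?_, BalAux.bal_leaves_card ht, ?_, ?_⟩
  · intro v
    rw [BalAux.bal_numChildren ht]
    split_ifs with h
    · exact Or.inl rfl
    · exact Or.inr rfl
  · intro l1 l2 h1 h2
    rw [BalAux.bal_isLeaf_iff ht] at h1 h2
    have hm1 := BalAux.bal_mem ht l1
    have hub : Nat.log 2 l1.val < Nat.log 2 T.leaves.card + 2 := by
      apply Nat.log_lt_of_lt_pow (by omega)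
      have h1' : T.leaves.card < 2^(Nat.log 2 T.leaves.card + 1) :=
        Nat.lt_pow_succ_log_self one_lt_two _
      have : (2:ℕ)^(Nat.log 2 T.leaves.card + 2)
          = 2*2^(Nat.log 2 T.leaves.card + 1) := by ring
      omega
    have hlb : Nat.log 2 T.leaves.card ≤ Nat.log 2 l2.val := Nat.log_mono_right h2
    rw [BalAux.bal_depth ht l1, BalAux.bal_depth ht l2]
    omega
  · exact le_trans (T.g_le hone) (le_of_eq (BalAux.bal_g ht).symm)
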